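/- (Invariance of Belavin's R-matrix.) With g, h ∈ GL(ℂ^n) defined by g e^k = exp(2πik/n)e^k and h e^k = e^{k+1} (indices mod n), Belavin's R-matrix satisfies R(u) = (x⊗x)R(u)(x⊗x)^{-1} for x = g and x = h, where R(u)^{ij}_{i'j'} = δ_{i+j,i'+j'} θ^{(i'-j')}(u+ℏ)/(θ^{(i'-i)}(ℏ)θ^{(i-j')}(u)) · ∏_{k=0}^{n-1}θ^{(k)}(u)/∏_{k=1}^{n-1}θ^{(k)}(0). -/

import Mathlib

open Kronecker

/-- `θ^{(j)}(u) := θ_{1/2 - j/n, 1}(u + 1/2, nτ)` for `j : ZMod n`. -/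
noncomputable def thetaB (n : ℕ) (τ : ℂ) (j : ZMod n) (u : ℂ) : ℂ :=
  ∑' μ : ℤ, Complex.exp ((2 * ↑Real.pi * Complex.I) *
    (((μ : ℂ) + 1/2 - (j.val : ℂ)/(n : ℂ)) * (u + 1/2) +
      ((μ : ℂ) + 1/2 - (j.val : ℂ)/(n : ℂ))^2 * ((n : ℂ) * τ) / 2))

/-- Matrix elements of Belavin's R-matrix. -/
noncomputable def belavinR (n : ℕ) (τ hb u : ℂ) (i j i' j' : ZMod n) : ℂ :=
  if i + j = i' + j' then
    thetaB n τ (i' - j') (u + hb) / (thetaB n τ (i' - i) hb * thetaB n τ (i - j') u) *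
      (∏ k ∈ Finset.range n, thetaB n τ (k : ZMod n) u) /
      (∏ k ∈ Finset.range (n - 1), thetaB n τ ((k : ZMod n) + 1) 0)
  else 0

/-- Belavin's R-matrix as a matrix on `ℂ^n ⊗ ℂ^n`, with the convention
`R(u)(e^i⊗e^j) = Σ_{i',j'} e^{i'}⊗e^{j'} R(u)^{ij}_{i'j'}`. -/
noncomputable def belavinRMat (n : ℕ) (τ hb u : ℂ) :
    Matrix (ZMod n × ZMod n) (ZMod n × ZMod n) ℂ :=
  Matrix.of fun p q => belavinR n τ hb u q.1 q.2 p.1 p.2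

/-- `g e^k = exp(2πik/n) e^k`. -/
noncomputable def gMat (n : ℕ) : Matrix (ZMod n) (ZMod n) ℂ :=
  Matrix.diagonal fun k => Complex.exp ((2 * ↑Real.pi * Complex.I) * (k.val : ℂ) / (n : ℂ))

/-- `h e^k = e^{k+1}` (indices mod n). -/
def hMat (n : ℕ) : Matrix (ZMod n) (ZMod n) ℂ :=
  Matrix.of fun i j => if i = j + 1 then 1 else 0

/-- `exp(2πI·a/n)` depends only on `a % n`. -/
lemma expAux (n : ℕ) (a : ℕ) :
    Complex.exp ((2 * ↑Real.pi * Complex.I) * (a : ℂ) / (n : ℂ)) =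
      Complex.exp ((2 * ↑Real.pi * Complex.I) * ((a % n : ℕ) : ℂ) / (n : ℂ)) := by
  rcases eq_or_ne (n : ℂ) 0 with h | h
  · norm_cast at h; simp [h]
  · have key : (a : ℂ) = ((a % n : ℕ) : ℂ) + (n : ℂ) * ((a / n : ℕ) : ℂ) := by
      exact_mod_cast congrArg (Nat.cast : ℕ → ℂ) (Nat.mod_add_div a n).symm
    have h1 : ∀ m : ℕ, Complex.exp (2 * ↑Real.pi * Complex.I * ((n : ℂ) * (m : ℂ)) / (n : ℂ))
        = 1 := by
      intro m
      have e : 2 * ↑Real.pi * Complex.I * ((n : ℂ) * (m : ℂ)) / (n : ℂ)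
          = ((m : ℤ) : ℂ) * (2 * ↑Real.pi * Complex.I) := by
        push_cast
        field_simp
      rw [e, Complex.exp_int_mul_two_pi_mul_I]
    rw [key, mul_add, add_div, Complex.exp_add, h1, mul_one]

lemma expAdd (n : ℕ) [NeZero n] (a b : ZMod n) :
    Complex.exp ((2 * ↑Real.pi * Complex.I) * ((a.val : ℂ)) / (n : ℂ)) *
      Complex.exp ((2 * ↑Real.pi * Complex.I) * ((b.val : ℂ)) / (n : ℂ)) =
    Complex.exp ((2 * ↑Real.pi * Complex.I) * (((a + b).val : ℂ)) / (n : ℂ)) := by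
  rw [← Complex.exp_add, ZMod.val_add, ← expAux]
  congr 1
  push_cast
  ring

/-- Invariance of Belavin's R-matrix: `R(u) = (x⊗x)R(u)(x⊗x)⁻¹` for `x = g, h`,
stated as `(x⊗x)·R(u) = R(u)·(x⊗x)`. -/
theorem belavinR_invariance (n : ℕ) [NeZero n] (hn : 2 ≤ n) (τ : ℂ)
    (hτ : 0 < τ.im) (hb u : ℂ)
    (hlat : ¬ ∃ m k : ℤ, hb = (m : ℂ) + (k : ℂ) * τ)
    (hden1 : ∀ k : ZMod n, thetaB n τ k hb ≠ 0)
    (hden2 : ∀ k : ZMod n, thetaB n τ k u ≠ 0)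
    (hden3 : (∏ k ∈ Finset.range (n - 1), thetaB n τ ((k : ZMod n) + 1) 0) ≠ 0) :
    (gMat n ⊗ₖ gMat n) * belavinRMat n τ hb u =
        belavinRMat n τ hb u * (gMat n ⊗ₖ gMat n) ∧
    (hMat n ⊗ₖ hMat n) * belavinRMat n τ hb u =
        belavinRMat n τ hb u * (hMat n ⊗ₖ hMat n) := by
  constructor
  · -- g part
    have hd : gMat n ⊗ₖ gMat n = Matrix.diagonal fun p : ZMod n × ZMod n =>
        Complex.exp ((2 * ↑Real.pi * Complex.I) * (p.1.val : ℂ) / (n : ℂ)) *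
        Complex.exp ((2 * ↑Real.pi * Complex.I) * (p.2.val : ℂ) / (n : ℂ)) := by
      rw [gMat, Matrix.diagonal_kronecker_diagonal]
    rw [hd]
    ext ⟨i', j'⟩ ⟨i, j⟩
    rw [Matrix.diagonal_mul, Matrix.mul_diagonal]
    show _ * belavinR n τ hb u i j i' j' = belavinR n τ hb u i j i' j' * _
    unfold belavinR
    split_ifs with hij
    · rw [expAdd, expAdd, ← hij]
      ring
    · simp
  · -- h part
    ext ⟨i', j'⟩ ⟨i, j⟩
    rw [Matrix.mul_apply, Matrix.mul_apply]
    have hh : ∀ a b : ZMod n, hMat n a b = if b = a - 1 then 1 else 0 := by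
      intro a b
      simp only [hMat, Matrix.of_apply]
      congr 1
      simp [eq_comm, eq_sub_iff_add_eq, sub_eq_iff_eq_add]
    have lhs : ∑ r : ZMod n × ZMod n, (hMat n ⊗ₖ hMat n) (i', j') r *
        belavinRMat n τ hb u r (i, j) = belavinRMat n τ hb u (i' - 1, j' - 1) (i, j) := by
      rw [Fintype.sum_prod_type]
      simp only [Matrix.kroneckerMap_apply, hh]
      simp [Finset.sum_ite_eq, ite_mul, mul_ite]
    have rhs : ∑ r : ZMod n × ZMod n, belavinRMat n τ hb u (i', j') r *
        (hMat n ⊗ₖ hMat n) r (i, j) = belavinRMat n τ hb u (i', j') (i + 1, j + 1) := by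
      rw [Fintype.sum_prod_type]
      simp only [Matrix.kroneckerMap_apply, hMat, Matrix.of_apply]
      simp [Finset.sum_ite_eq, ite_mul, mul_ite]
    rw [lhs, rhs]
    show belavinR n τ hb u i j (i' - 1) (j' - 1) = belavinR n τ hb u (i + 1) (j + 1) i' j'
    unfold belavinR
    have hc : (i + j = i' - 1 + (j' - 1)) ↔ (i + 1 + (j + 1) = i' + j') := by
      constructor <;> intro h <;> linear_combination h
    split_ifs with h1 h2
    · rw [show i' - 1 - (j' - 1) = i' - j' from by ring,
          show i' - 1 - i = i' - (i + 1) from by ring,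
          show i - (j' - 1) = i + 1 - j' from by ring]
    · exact absurd (hc.mp h1) h2
    · exact absurd (hc.mpr ‹_›) h1
    · rfl
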